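/- Let T : [a₀, b₀] → ℝ be C¹ with λ/Λ ≤ T'(x) ≤ Λ/λ for constants 0 < λ < Λ, with T(x) > x on [a₀, b₀] and no fixed points, and let a₁ := T(a₀). Suppose v₀ : [a₀, a₁] → ℝ is continuous, positive, and satisfies the compatibility condition v₀(a₁) = T'(a₀) v₀(a₀). Then v₀ extends uniquely to a continuous positive function v on [a₀, b₁] (b₁ := T(b₀)) satisfying the functional equation v(T(x)) = T'(x) v(x) for all x ∈ [a₀, b₀]. -/

import Mathlib

open Set

/-- Continuity on a union of two closed sets. -/
lemma aux_contOn_union {f : ℝ → ℝ} {s t : Set ℝ} (hs : IsClosed s) (ht : IsClosed t)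
    (hfs : ContinuousOn f s) (hft : ContinuousOn f t) : ContinuousOn f (s ∪ t) := by
  intro x hx
  have h1 : ContinuousWithinAt f s x := by
    by_cases hxs : x ∈ s
    · exact hfs x hxs
    · exact continuousWithinAt_of_notMem_closure (by rwa [hs.closure_eq])
  have h2 : ContinuousWithinAt f t x := by
    by_cases hxt : x ∈ t
    · exact hft x hxt
    · exact continuousWithinAt_of_notMem_closure (by rwa [ht.closure_eq])
  exact h1.union h2

/-- Unique continuous positive extension solving the functional equation
`v (T x) = T' x * v x`: a continuous positive `v₀` on the fundamental interval
`[a₀, T a₀]` satisfying the compatibility condition extends uniquely to a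
continuous positive solution on `[a₀, T b₀]`. -/
theorem unique_extension_julia_equation
    (a₀ b₀ : ℝ) (hab : a₀ < b₀)
    (lam Lam : ℝ) (hlam : 0 < lam) (hlL : lam < Lam)
    (T T' : ℝ → ℝ)
    (hderiv : ∀ x ∈ Icc a₀ b₀, HasDerivAt T (T' x) x)
    (hT'cont : ContinuousOn T' (Icc a₀ b₀))
    (hT'lb : ∀ x ∈ Icc a₀ b₀, lam / Lam ≤ T' x)
    (hT'ub : ∀ x ∈ Icc a₀ b₀, T' x ≤ Lam / lam)
    (hgt : ∀ x ∈ Icc a₀ b₀, x < T x)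
    (a₁ b₁ : ℝ) (ha₁ : a₁ = T a₀) (hb₁ : b₁ = T b₀)
    (v₀ : ℝ → ℝ)
    (hv₀cont : ContinuousOn v₀ (Icc a₀ a₁))
    (hv₀pos : ∀ x ∈ Icc a₀ a₁, 0 < v₀ x)
    (hcompat : v₀ a₁ = T' a₀ * v₀ a₀) :
    ∃ v : ℝ → ℝ,
      (ContinuousOn v (Icc a₀ b₁) ∧
       (∀ x ∈ Icc a₀ b₁, 0 < v x) ∧
       (∀ x ∈ Icc a₀ a₁, v x = v₀ x) ∧
       (∀ x ∈ Icc a₀ b₀, v (T x) = T' x * v x)) ∧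
      ∀ w : ℝ → ℝ,
        (ContinuousOn w (Icc a₀ b₁) ∧
         (∀ x ∈ Icc a₀ b₁, 0 < w x) ∧
         (∀ x ∈ Icc a₀ a₁, w x = v₀ x) ∧
         (∀ x ∈ Icc a₀ b₀, w (T x) = T' x * w x)) →
        ∀ x ∈ Icc a₀ b₁, w x = v x := by
  classical
  have ha₀mem : a₀ ∈ Icc a₀ b₀ := left_mem_Icc.2 hab.le
  have hb₀mem : b₀ ∈ Icc a₀ b₀ := right_mem_Icc.2 hab.le
  have ha01 : a₀ < a₁ := ha₁ ▸ hgt a₀ ha₀mem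
  have hb01 : b₀ < b₁ := hb₁ ▸ hgt b₀ hb₀mem
  have hTcont : ContinuousOn T (Icc a₀ b₀) :=
    fun x hx => (hderiv x hx).continuousAt.continuousWithinAt
  have hlLpos : 0 < lam / Lam := div_pos hlam (hlam.trans hlL)
  have hT'pos : ∀ x ∈ Icc a₀ b₀, 0 < T' x := fun x hx => lt_of_lt_of_le hlLpos (hT'lb x hx)
  have hTmono : StrictMonoOn T (Icc a₀ b₀) := by
    apply strictMonoOn_of_deriv_pos (convex_Icc a₀ b₀) hTcont
    intro x hx
    rw [interior_Icc] at hx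
    have hx' : x ∈ Icc a₀ b₀ := Ioo_subset_Icc_self hx
    rw [(hderiv x hx').deriv]
    exact hT'pos x hx'
  have ha1b1 : a₁ ≤ b₁ := by
    rw [ha₁, hb₁]; exact (hTmono.monotoneOn) ha₀mem hb₀mem hab.le
  have himg : T '' Icc a₀ b₀ = Icc a₁ b₁ := by
    apply Subset.antisymm
    · rintro y ⟨x, hx, rfl⟩
      exact ⟨ha₁ ▸ hTmono.monotoneOn ha₀mem hx hx.1,
             hb₁ ▸ hTmono.monotoneOn hx hb₀mem hx.2⟩
    · rw [ha₁, hb₁]; exact intermediate_value_Icc hab.le hTcont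
  -- the inverse map S
  let e : Icc a₀ b₀ ≃o Icc a₁ b₁ := (hTmono.orderIso T _).trans (OrderIso.setCongr _ _ himg)
  let S : ℝ → ℝ := fun y => if h : y ∈ Icc a₁ b₁ then (e.symm ⟨y, h⟩ : ℝ) else a₀
  have hS_mem : ∀ y ∈ Icc a₁ b₁, S y ∈ Icc a₀ b₀ := by
    intro y hy; simp only [S, dif_pos hy]; exact (e.symm ⟨y, hy⟩).2
  have hST : ∀ x ∈ Icc a₀ b₀, S (T x) = x := by
    intro x hx
    have hTx : T x ∈ Icc a₁ b₁ := himg ▸ mem_image_of_mem T hx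
    have he : e ⟨x, hx⟩ = ⟨T x, hTx⟩ := rfl
    simp only [S, dif_pos hTx]
    rw [← he, e.symm_apply_apply]
  have hTS : ∀ y ∈ Icc a₁ b₁, T (S y) = y := by
    intro y hy
    obtain ⟨x, hx, rfl⟩ : y ∈ T '' Icc a₀ b₀ := himg ▸ hy
    rw [hST x hx]
  have hScont : ContinuousOn S (Icc a₁ b₁) := by
    rw [continuousOn_iff_continuous_restrict]
    have hres : domRestrict (Icc a₁ b₁) S = fun y => (e.symm y : ℝ) := by
      funext y; simp only [domRestrict_apply, S, dif_pos y.2]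
    rw [hres]
    exact continuous_subtype_val.comp e.symm.continuous
  -- uniform step size δ
  obtain ⟨x₀, hx₀, hx₀min⟩ :=
    isCompact_Icc.exists_isMinOn (nonempty_Icc.2 hab.le) (hTcont.sub continuousOn_id)
  set δ := T x₀ - x₀ with hδdef
  have hδpos : 0 < δ := sub_pos.2 (hgt x₀ hx₀)
  have hδle : ∀ x ∈ Icc a₀ b₀, δ ≤ T x - x := fun x hx => hx₀min hx
  have hstep : ∀ y ∈ Icc a₁ b₁, S y ≤ y - δ := by
    intro y hy
    have h1 := hδle (S y) (hS_mem y hy)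
    rw [hTS y hy] at h1
    linarith
  -- number of iterations
  set N : ℕ := ⌈(b₁ - a₁) / δ⌉₊ with hNdef
  have hN : b₁ ≤ a₁ + N * δ := by
    have h1 : (b₁ - a₁) / δ ≤ N := Nat.le_ceil _
    have h2 : b₁ - a₁ ≤ N * δ := by
      rw [div_le_iff₀ hδpos] at h1; linarith
    linarith
  -- the extension as iterate of the functional
  set F : (ℝ → ℝ) → ℝ → ℝ :=
    fun f y => if y ≤ a₁ then v₀ y else T' (S y) * f (S y) with hFdef
  have key : ∀ n : ℕ, ∀ y ∈ Icc a₀ b₁, y ≤ a₁ + n * δ →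
      F^[n + 1] v₀ y = F^[n] v₀ y := by
    intro n
    induction n with
    | zero =>
      intro y _ hy
      simp only [Nat.cast_zero, zero_mul, add_zero] at hy
      simp only [zero_add, Function.iterate_one, Function.iterate_zero, id_eq, hFdef,
        if_pos hy]
    | succ n ih =>
      intro y hy hyb
      conv_lhs => rw [Function.iterate_succ_apply' F (n + 1) v₀]
      conv_rhs => rw [Function.iterate_succ_apply' F n v₀]
      by_cases hya : y ≤ a₁
      · simp only [hFdef, if_pos hya]
      · have hy1 : y ∈ Icc a₁ b₁ := ⟨le_of_not_ge hya, hy.2⟩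
        have hSy : S y ∈ Icc a₀ b₀ := hS_mem y hy1
        have hSy1 : S y ∈ Icc a₀ b₁ := ⟨hSy.1, hSy.2.trans hb01.le⟩
        have hSyb : S y ≤ a₁ + n * δ := by
          have := hstep y hy1
          push_cast at hyb ⊢
          linarith
        have h := ih (S y) hSy1 hSyb
        simp only [hFdef] at h ⊢
        simp only [if_neg hya]
        rw [h]
  set v : ℝ → ℝ := F^[N] v₀ with hvdef
  have hfix : ∀ y ∈ Icc a₀ b₁, v y = if y ≤ a₁ then v₀ y else T' (S y) * v (S y) := by
    intro y hy
    have h1 : F^[N + 1] v₀ y = v y := key N y hy (hy.2.trans hN)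
    rw [← h1, Function.iterate_succ_apply' F N]
  have hext : ∀ y ∈ Icc a₀ a₁, v y = v₀ y := by
    intro y hy
    rw [hfix y ⟨hy.1, hy.2.trans ha1b1⟩, if_pos hy.2]
  have hfix2 : ∀ y ∈ Icc a₁ b₁, v y = T' (S y) * v (S y) := by
    intro y hy
    have hy' : y ∈ Icc a₀ b₁ := ⟨ha01.le.trans hy.1, hy.2⟩
    by_cases hya : y ≤ a₁
    · have hyeq : y = a₁ := le_antisymm hya hy.1
      have hSa : S y = a₀ := by
        rw [hyeq, ha₁]
        exact hST a₀ ha₀mem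
      rw [hfix y hy', if_pos hya, hSa, hyeq, hcompat, hext a₀ ⟨le_rfl, ha01.le⟩]
    · rw [hfix y hy', if_neg hya]
  -- positivity
  have hposN : ∀ n : ℕ, ∀ y ∈ Icc a₀ b₁, y ≤ a₁ + n * δ → 0 < v y := by
    intro n
    induction n with
    | zero =>
      intro y hy hyb
      simp only [Nat.cast_zero, zero_mul, add_zero] at hyb
      rw [hext y ⟨hy.1, hyb⟩]
      exact hv₀pos y ⟨hy.1, hyb⟩
    | succ n ih =>
      intro y hy hyb
      by_cases hya : y ≤ a₁
      · rw [hext y ⟨hy.1, hya⟩]; exact hv₀pos y ⟨hy.1, hya⟩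
      · have hy1 : y ∈ Icc a₁ b₁ := ⟨le_of_not_ge hya, hy.2⟩
        have hSy : S y ∈ Icc a₀ b₀ := hS_mem y hy1
        have hSy1 : S y ∈ Icc a₀ b₁ := ⟨hSy.1, hSy.2.trans hb01.le⟩
        have hSyb : S y ≤ a₁ + n * δ := by
          have := hstep y hy1
          push_cast at hyb ⊢
          linarith
        rw [hfix2 y hy1]
        exact mul_pos (hT'pos _ hSy) (ih (S y) hSy1 hSyb)
  have hpos : ∀ y ∈ Icc a₀ b₁, 0 < v y :=
    fun y hy => hposN N y hy (hy.2.trans hN)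
  -- functional equation
  have hfe : ∀ x ∈ Icc a₀ b₀, v (T x) = T' x * v x := by
    intro x hx
    have hTx : T x ∈ Icc a₁ b₁ := himg ▸ mem_image_of_mem T hx
    rw [hfix2 (T x) hTx, hST x hx]
  -- continuity
  have hcontN : ∀ n : ℕ, ContinuousOn v (Icc a₀ (min (a₁ + n * δ) b₁)) := by
    intro n
    induction n with
    | zero =>
      simp only [Nat.cast_zero, zero_mul, add_zero, min_eq_left ha1b1]
      exact hv₀cont.congr hext
    | succ n ih =>
      set c := min (a₁ + (n + 1 : ℕ) * δ) b₁ with hcdef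
      have hc1 : a₁ ≤ c := le_min (by push_cast; nlinarith [hδpos]) ha1b1
      have hcb : c ≤ b₁ := min_le_right _ _
      have hsub : Icc a₁ c ⊆ Icc a₁ b₁ := Icc_subset_Icc_right hcb
      have hmaps : ∀ y ∈ Icc a₁ c, S y ∈ Icc a₀ (min (a₁ + n * δ) b₁) := by
        intro y hy
        have hy' : y ∈ Icc a₁ b₁ := hsub hy
        have hSy := hS_mem y hy'
        refine ⟨hSy.1, le_min ?_ (hSy.2.trans hb01.le)⟩
        have h1 := hstep y hy'
        have h2 : y ≤ a₁ + (n + 1 : ℕ) * δ := hy.2.trans (min_le_left _ _)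
        push_cast at h2 ⊢
        linarith
      have hcB : ContinuousOn v (Icc a₁ c) := by
        have hg : ContinuousOn (fun y => T' (S y) * v (S y)) (Icc a₁ c) := by
          refine ContinuousOn.mul ?_ ?_
          · exact hT'cont.comp (hScont.mono hsub) (fun y hy => hS_mem y (hsub hy))
          · exact ih.comp (hScont.mono hsub) hmaps
        exact hg.congr (fun y hy => hfix2 y (hsub hy))
      have hcA : ContinuousOn v (Icc a₀ a₁) := hv₀cont.congr hext
      have hU : ContinuousOn v (Icc a₀ a₁ ∪ Icc a₁ c) :=
        aux_contOn_union isClosed_Icc isClosed_Icc hcA hcB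
      exact hU.mono (Icc_subset_Icc_union_Icc (b := a₁))
  have hcont : ContinuousOn v (Icc a₀ b₁) := by
    have h := hcontN N
    rwa [min_eq_right hN] at h
  -- uniqueness
  refine ⟨v, ⟨hcont, hpos, hext, hfe⟩, ?_⟩
  rintro w ⟨-, -, hwext, hwfe⟩
  have huniq : ∀ n : ℕ, ∀ y ∈ Icc a₀ b₁, y ≤ a₁ + n * δ → w y = v y := by
    intro n
    induction n with
    | zero =>
      intro y hy hyb
      simp only [Nat.cast_zero, zero_mul, add_zero] at hyb
      rw [hwext y ⟨hy.1, hyb⟩, hext y ⟨hy.1, hyb⟩]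
    | succ n ih =>
      intro y hy hyb
      by_cases hya : y ≤ a₁
      · rw [hwext y ⟨hy.1, hya⟩, hext y ⟨hy.1, hya⟩]
      · have hy1 : y ∈ Icc a₁ b₁ := ⟨le_of_not_ge hya, hy.2⟩
        have hSy : S y ∈ Icc a₀ b₀ := hS_mem y hy1
        have hSy1 : S y ∈ Icc a₀ b₁ := ⟨hSy.1, hSy.2.trans hb01.le⟩
        have hSyb : S y ≤ a₁ + n * δ := by
          have := hstep y hy1
          push_cast at hyb ⊢
          linarith
        have h1 := hwfe (S y) hSy
        rw [hTS y hy1] at h1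
        rw [h1, hfix2 y hy1, ih (S y) hSy1 hSyb]
  exact fun x hx => huniq N x hx (hx.2.trans hN)
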